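/- Let N be a positive integer, let σ be a uniformly distributed random permutation of {1,…,N}, and let Y_k = #{ i ≤ k : σ(i) ≤ σ(k) } be the relative ranks. Then for all integers i, k with 2 ≤ i and i + 1 < k ≤ N, the probability of the event { there exists s with i < s < k such that Y_j > 1 for all i < j < s, Y_s = 1, Y_j > 2 for all s < j < k, and Y_k ≤ 2 } equals 2i(k−i−1)/((k−2)(k−1)k). -/

import Mathlib

open MeasureTheory ProbabilityTheory
open scoped ENNReal

noncomputable section

instance permMeasurableSpace (N : ℕ) : MeasurableSpace (Equiv.Perm (Fin N)) := ⊤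

/-- The uniform probability measure on the set of all permutations of `{1,…,N}`. -/
noncomputable def uniformPerm (N : ℕ) : Measure (Equiv.Perm (Fin N)) :=
  (PMF.uniformOfFintype (Equiv.Perm (Fin N))).toMeasure

/-- The relative rank `Y_k = #{ i : 1 ≤ i ≤ k ∧ σ(i) ≤ σ(k) }` of the `k`-th item
(1-indexed: the paper's item `i ∈ {1,…,N}` is the element `⟨i-1, _⟩ : Fin N`). -/
def relRank (N : ℕ) (σ : Equiv.Perm (Fin N)) (k : ℕ) : ℕ :=
  if h : 1 ≤ k ∧ k ≤ N then
    (Finset.univ.filter fun i : Fin N => (i : ℕ) + 1 ≤ k ∧ σ i ≤ σ ⟨k - 1, by omega⟩).card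
  else 0

namespace SecretaryAux

open Finset
open scoped Nat

variable {N : ℕ}

/-- The Lehmer-type code: `codeFn N σ j = #{ i < j : σ i < σ j }`. -/
def codeFn (N : ℕ) (σ : Equiv.Perm (Fin N)) (j : Fin N) : ℕ :=
  (Finset.univ.filter fun i : Fin N => i < j ∧ σ i < σ j).card

lemma codeFn_lt (σ : Equiv.Perm (Fin N)) (j : Fin N) : codeFn N σ j < j.val + 1 := by
  have hsub : (Finset.univ.filter fun i : Fin N => i < j ∧ σ i < σ j) ⊆ Finset.Iio j := by
    intro x hx
    simp only [mem_filter, mem_Iio] at hx ⊢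
    exact hx.2.1
  have := Finset.card_le_card hsub
  rw [Fin.card_Iio] at this
  unfold codeFn
  omega

lemma codeFn_eq_sdiff (σ : Equiv.Perm (Fin N)) (j : Fin N) :
    codeFn N σ j = ((Finset.Iio (σ j)) \ ((Finset.Ioi j).image σ)).card := by
  apply Finset.card_bij (fun i _ => σ i)
  · intro a ha
    simp only [mem_filter, mem_univ, true_and] at ha
    simp only [mem_sdiff, mem_Iio, mem_image, mem_Ioi, not_exists, not_and]
    refine ⟨ha.2, fun x hx hxe => ?_⟩
    have := σ.injective hxe
    subst this
    exact absurd ha.1 (not_lt.mpr hx.le)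
  · intro a _ b _ h
    exact σ.injective h
  · intro b hb
    simp only [mem_sdiff, mem_Iio, mem_image, mem_Ioi, not_exists, not_and] at hb
    obtain ⟨x, hx⟩ := σ.surjective b
    have hxj : x ≠ j := by
      rintro rfl
      rw [hx] at hb
      exact absurd hb.1 (lt_irrefl _)
    have hnot : ¬ j < x := fun h => hb.2 x h hx
    refine ⟨x, ?_, hx⟩
    simp only [mem_filter, mem_univ, true_and]
    exact ⟨lt_of_le_of_ne (not_lt.mp hnot) hxj, hx ▸ hb.1⟩

lemma card_Iio_sdiff_inj {n : ℕ} (U : Finset (Fin n)) {v w : Fin n}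
    (hv : v ∉ U) (hw : w ∉ U)
    (h : (Finset.Iio v \ U).card = (Finset.Iio w \ U).card) : v = w := by
  by_contra hne
  wlog hlt : v < w generalizing v w
  · exact this hw hv h.symm (Ne.symm hne) (lt_of_le_of_ne (not_lt.mp hlt) (Ne.symm hne))
  have hss : (Finset.Iio v \ U) ⊂ (Finset.Iio w \ U) := by
    refine ⟨Finset.sdiff_subset_sdiff (Finset.Iio_subset_Iio hlt.le) le_rfl, fun hsub => ?_⟩
    have hvmem : v ∈ Finset.Iio w \ U := by
      simp only [mem_sdiff, mem_Iio]
      exact ⟨hlt, hv⟩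
    have := hsub hvmem
    simp only [mem_sdiff, mem_Iio] at this
    exact absurd this.1 (lt_irrefl _)
  exact absurd h (Finset.card_lt_card hss).ne

lemma codeFn_injective {σ τ : Equiv.Perm (Fin N)}
    (h : ∀ j, codeFn N σ j = codeFn N τ j) : σ = τ := by
  have key : ∀ n : ℕ, ∀ j : Fin N, N - j.val ≤ n → σ j = τ j := by
    intro n
    induction n with
    | zero => intro j hj; exact absurd hj (by have := j.isLt; omega)
    | succ n ih =>
      intro j hj
      have hIoi : (Finset.Ioi j).image σ = (Finset.Ioi j).image τ := by
        apply Finset.image_congr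
        intro x hx
        simp only [Finset.coe_Ioi, Set.mem_Ioi] at hx
        exact ih x (by have := Fin.lt_iff_val_lt_val.mp hx; omega)
      have hσ : σ j ∉ (Finset.Ioi j).image σ := by
        simp only [mem_image, mem_Ioi, not_exists, not_and]
        intro x hx hxe
        have := σ.injective hxe
        subst this
        exact absurd hx (lt_irrefl _)
      have hτ : τ j ∉ (Finset.Ioi j).image σ := by
        rw [hIoi]
        simp only [mem_image, mem_Ioi, not_exists, not_and]
        intro x hx hxe
        have := τ.injective hxe
        subst this
        exact absurd hx (lt_irrefl _)
      apply card_Iio_sdiff_inj ((Finset.Ioi j).image σ) hσ hτ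
      have e1 := codeFn_eq_sdiff σ j
      have e2 := codeFn_eq_sdiff τ j
      rw [← e1, hIoi, ← e2]
      exact h j
  exact Equiv.ext fun j => key N j (by omega)

/-- The full code as a map into the product of `Fin (j+1)`. -/
def codeFull (N : ℕ) (σ : Equiv.Perm (Fin N)) : ∀ j : Fin N, Fin (j.val + 1) :=
  fun j => ⟨codeFn N σ j, codeFn_lt σ j⟩

lemma codeFull_injective : Function.Injective (codeFull N) := by
  intro σ τ h
  exact codeFn_injective fun j => congrArg Fin.val (congrFun h j)

lemma codeFull_bijective : Function.Bijective (codeFull N) := by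
  rw [Fintype.bijective_iff_injective_and_card]
  refine ⟨codeFull_injective, ?_⟩
  rw [Fintype.card_perm, Fintype.card_pi, Fintype.card_fin]
  simp only [Fintype.card_fin]
  rw [Fin.prod_univ_eq_prod_range (fun m => m + 1)]
  exact (Finset.prod_range_add_one_eq_factorial N).symm

lemma card_code_filter (P : ∀ j : Fin N, Fin (j.val + 1) → Prop)
    [∀ j, DecidablePred (P j)] :
    (Finset.univ.filter fun σ : Equiv.Perm (Fin N) => ∀ j, P j (codeFull N σ j)).card
      = ∏ j : Fin N, (Finset.univ.filter (P j)).card := by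
  rw [← Fintype.card_piFinset]
  apply Finset.card_bij (fun σ _ => codeFull N σ)
  · intro σ hσ
    simp only [mem_filter, mem_univ, true_and] at hσ
    rw [Fintype.mem_piFinset]
    intro j
    simp only [mem_filter, mem_univ, true_and]
    exact hσ j
  · intro a _ b _ h
    exact codeFull_injective h
  · intro f hf
    obtain ⟨σ, rfl⟩ := codeFull_bijective.2 f
    refine ⟨σ, ?_, rfl⟩
    simp only [mem_filter, mem_univ, true_and]
    intro j
    have := Fintype.mem_piFinset.mp hf j
    simpa using this

lemma relRank_eq_codeFn (σ : Equiv.Perm (Fin N)) {p : ℕ} (h1 : 1 ≤ p) (h2 : p ≤ N) :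
    relRank N σ p = codeFn N σ ⟨p - 1, by omega⟩ + 1 := by
  rw [relRank, dif_pos ⟨h1, h2⟩]
  set j : Fin N := ⟨p - 1, by omega⟩ with hj
  have hset : (Finset.univ.filter fun i : Fin N => (i : ℕ) + 1 ≤ p ∧ σ i ≤ σ j)
      = insert j (Finset.univ.filter fun i : Fin N => i < j ∧ σ i < σ j) := by
    ext x
    simp only [mem_filter, mem_univ, true_and, mem_insert]
    constructor
    · rintro ⟨hx1, hx2⟩
      rcases eq_or_ne x j with rfl | hne
      · exact Or.inl rfl
      · refine Or.inr ⟨?_, lt_of_le_of_ne hx2 fun e => hne (σ.injective e)⟩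
        rw [Fin.lt_iff_val_lt_val]
        have hxv : (x : ℕ) ≠ (j : ℕ) := fun e => hne (Fin.ext e)
        simp only [hj] at hxv ⊢
        omega
    · rintro (rfl | ⟨hlt, hle⟩)
      · refine ⟨?_, le_refl _⟩
        simp only [hj]
        omega
      · refine ⟨?_, hle.le⟩
        rw [Fin.lt_iff_val_lt_val] at hlt
        simp only [hj] at hlt ⊢
        omega
  rw [hset, Finset.card_insert_of_notMem (by simp)]
  rfl

lemma relRank_fin (σ : Equiv.Perm (Fin N)) (j : Fin N) :
    relRank N σ (j.val + 1) = codeFn N σ j + 1 := by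
  have := relRank_eq_codeFn σ (p := j.val + 1) (by omega) (by omega)
  simpa using this

/-- The per-position condition for the event, for fixed `i s k`. -/
abbrev Qp (i s k p r : ℕ) : Prop :=
  (i < p → p < s → 1 < r) ∧ (p = s → r = 1) ∧ (s < p → p < k → 2 < r) ∧ (p = k → r ≤ 2)

/-- number of allowed code values at 0-indexed position `m` (1-indexed position `m+1`). -/
def fFun (i s k m : ℕ) : ℕ :=
  if m + 1 ≤ i then m + 1
  else if m + 1 < s then m
  else if m + 1 = s then 1
  else if m + 1 < k then m - 1
  else if m + 1 = k then 2
  else m + 1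

lemma card_filter_fin_val (p : ℕ) (q : ℕ → Prop) [DecidablePred q] :
    ((Finset.univ : Finset (Fin p)).filter fun x => q x.val).card
      = ((Finset.range p).filter q).card := by
  apply Finset.card_bij (fun x _ => x.val)
  · intro a ha
    simp only [mem_filter, mem_univ, true_and] at ha
    simp only [mem_filter, mem_range]
    exact ⟨a.isLt, ha⟩
  · intro a _ b _ h
    exact Fin.ext h
  · intro b hb
    simp only [mem_filter, mem_range] at hb
    exact ⟨⟨b, hb.1⟩, by simp [hb.2], rfl⟩

lemma factor_card {i s k : ℕ} (hi : 2 ≤ i) (his : i < s) (hsk : s < k) (p : ℕ) (hp : 1 ≤ p) :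
    ((Finset.range p).filter fun m => Qp i s k p (m + 1)).card = fFun i s k (p - 1) := by
  rcases Nat.lt_or_ge p (i+1) with h | h
  · have hf : fFun i s k (p - 1) = p := by
      unfold fFun; rw [if_pos (by omega)]; omega
    rw [hf]
    rw [Finset.filter_true_of_mem (fun m hm => by
      simp only [mem_range] at hm
      refine ⟨by omega, by omega, by omega, by omega⟩)]
    exact Finset.card_range p
  rcases Nat.lt_or_ge p s with h2 | h2
  · have hf : fFun i s k (p - 1) = p - 1 := by
      unfold fFun; rw [if_neg (by omega), if_pos (by omega)]
    rw [hf]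
    have hflt : ((Finset.range p).filter fun m => Qp i s k p (m + 1)) = Finset.Ico 1 p := by
      ext m
      simp only [mem_filter, mem_range, Finset.mem_Ico, Qp, true_implies]
      omega
    rw [hflt, Nat.card_Ico]
  rcases eq_or_ne p s with rfl | h3
  · have hf : fFun i p k (p - 1) = 1 := by
      unfold fFun; rw [if_neg (by omega), if_neg (by omega), if_pos (by omega)]
    rw [hf]
    have hflt : ((Finset.range p).filter fun m => Qp i p k p (m + 1)) = {0} := by
      ext m
      simp only [mem_filter, mem_range, Finset.mem_singleton, Qp, true_implies]
      omega
    rw [hflt, Finset.card_singleton]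
  rcases Nat.lt_or_ge p k with h4 | h4
  · have hf : fFun i s k (p - 1) = p - 2 := by
      unfold fFun
      rw [if_neg (by omega), if_neg (by omega), if_neg (by omega), if_pos (by omega)]
      omega
    rw [hf]
    have hflt : ((Finset.range p).filter fun m => Qp i s k p (m + 1)) = Finset.Ico 2 p := by
      ext m
      simp only [mem_filter, mem_range, Finset.mem_Ico, Qp, true_implies]
      omega
    rw [hflt, Nat.card_Ico]
  rcases eq_or_ne p k with rfl | h5
  · have hf : fFun i s p (p - 1) = 2 := by
      unfold fFun
      rw [if_neg (by omega), if_neg (by omega), if_neg (by omega), if_neg (by omega),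
        if_pos (by omega)]
    rw [hf]
    have hflt : ((Finset.range p).filter fun m => Qp i s p p (m + 1)) = Finset.Ico 0 2 := by
      ext m
      simp only [mem_filter, mem_range, Finset.mem_Ico, Qp, true_implies]
      omega
    rw [hflt, Nat.card_Ico]
  have hf : fFun i s k (p - 1) = p := by
    unfold fFun
    rw [if_neg (by omega), if_neg (by omega), if_neg (by omega), if_neg (by omega),
      if_neg (by omega)]
    omega
  rw [hf]
  rw [Finset.filter_true_of_mem (fun m hm => by
    simp only [mem_range] at hm
    refine ⟨by omega, by omega, by omega, by omega⟩)]
  exact Finset.card_range p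

lemma prod_Ico_pred (a b : ℕ) (ha : 1 ≤ a) :
    (∏ p ∈ Finset.Ico a b, (p - 1)) = ∏ p ∈ Finset.Ico (a - 1) (b - 1), p := by
  rw [Finset.prod_Ico_eq_prod_range, Finset.prod_Ico_eq_prod_range]
  rw [show b - 1 - (a - 1) = b - a by omega]
  exact Finset.prod_congr rfl fun t _ => by omega

lemma prod_Ico_sub2 (a b : ℕ) (ha : 2 ≤ a) :
    (∏ p ∈ Finset.Ico a b, (p - 2)) = ∏ p ∈ Finset.Ico (a - 2) (b - 2), p := by
  rw [Finset.prod_Ico_eq_prod_range, Finset.prod_Ico_eq_prod_range]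
  rw [show b - 2 - (a - 2) = b - a by omega]
  exact Finset.prod_congr rfl fun t _ => by omega

lemma prod_fFun {i s k : ℕ} (N : ℕ) (hi : 2 ≤ i) (his : i < s) (hsk : s < k) (hkN : k ≤ N) :
    (∏ m ∈ Finset.range N, fFun i s k m) * ((k - 2) * (k - 1) * k) = 2 * i * N ! := by
  have hprod : (∏ m ∈ Finset.range N, fFun i s k m)
      = ∏ p ∈ Finset.Ico 1 (N + 1), fFun i s k (p - 1) := by
    rw [Finset.prod_Ico_eq_prod_range]
    simp only [Nat.add_sub_cancel]
    exact (Finset.prod_congr rfl fun t _ => by rw [show 1 + t - 1 = t by omega]).symm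
  rw [hprod]
  -- split the interval
  rw [← Finset.prod_Ico_consecutive (fun p => fFun i s k (p - 1))
      (show (1:ℕ) ≤ k + 1 by omega) (show k + 1 ≤ N + 1 by omega)]
  rw [← Finset.prod_Ico_consecutive (fun p => fFun i s k (p - 1))
      (show (1:ℕ) ≤ k by omega) (show k ≤ k + 1 by omega)]
  rw [← Finset.prod_Ico_consecutive (fun p => fFun i s k (p - 1))
      (show (1:ℕ) ≤ s + 1 by omega) (show s + 1 ≤ k by omega)]
  rw [← Finset.prod_Ico_consecutive (fun p => fFun i s k (p - 1))
      (show (1:ℕ) ≤ s by omega) (show s ≤ s + 1 by omega)]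
  rw [← Finset.prod_Ico_consecutive (fun p => fFun i s k (p - 1))
      (show (1:ℕ) ≤ i + 1 by omega) (show i + 1 ≤ s by omega)]
  -- evaluate the pieces
  have e1 : (∏ p ∈ Finset.Ico 1 (i + 1), fFun i s k (p - 1)) = i ! := by
    rw [← Finset.prod_Ico_id_eq_factorial]
    refine Finset.prod_congr rfl fun p hp => ?_
    simp only [Finset.mem_Ico] at hp
    unfold fFun
    rw [if_pos (by omega)]
    omega
  have e2 : (∏ p ∈ Finset.Ico (i + 1) s, fFun i s k (p - 1))
      = ∏ p ∈ Finset.Ico i (s - 1), p := by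
    have hshift := prod_Ico_pred (i + 1) s (by omega)
    simp only [Nat.add_sub_cancel] at hshift
    rw [← hshift]
    refine Finset.prod_congr rfl fun p hp => ?_
    simp only [Finset.mem_Ico] at hp
    unfold fFun
    rw [if_neg (by omega), if_pos (by omega)]
  have e3 : (∏ p ∈ Finset.Ico s (s + 1), fFun i s k (p - 1)) = 1 := by
    rw [Finset.prod_Ico_succ_top (by omega), Finset.Ico_self, Finset.prod_empty, one_mul]
    unfold fFun
    rw [if_neg (by omega), if_neg (by omega), if_pos (by omega)]
  have e4 : (∏ p ∈ Finset.Ico (s + 1) k, fFun i s k (p - 1))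
      = ∏ p ∈ Finset.Ico (s - 1) (k - 2), p := by
    have hshift := prod_Ico_sub2 (s + 1) k (by omega)
    rw [show s + 1 - 2 = s - 1 by omega] at hshift
    rw [← hshift]
    refine Finset.prod_congr rfl fun p hp => ?_
    simp only [Finset.mem_Ico] at hp
    unfold fFun
    rw [if_neg (by omega), if_neg (by omega), if_neg (by omega), if_pos (by omega)]
    omega
  have e5 : (∏ p ∈ Finset.Ico k (k + 1), fFun i s k (p - 1)) = 2 := by
    rw [Finset.prod_Ico_succ_top (by omega), Finset.Ico_self, Finset.prod_empty, one_mul]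
    unfold fFun
    rw [if_neg (by omega), if_neg (by omega), if_neg (by omega), if_neg (by omega),
      if_pos (by omega)]
  have e6 : (∏ p ∈ Finset.Ico (k + 1) (N + 1), fFun i s k (p - 1))
      = ∏ p ∈ Finset.Ico (k + 1) (N + 1), p := by
    refine Finset.prod_congr rfl fun p hp => ?_
    simp only [Finset.mem_Ico] at hp
    unfold fFun
    rw [if_neg (by omega), if_neg (by omega), if_neg (by omega), if_neg (by omega),
      if_neg (by omega)]
    omega
  rw [e1, e2, e3, e4, e5, e6]
  -- now the factorial bookkeeping
  have hifact : i ! = i * (i - 1)! := by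
    rw [show i = (i - 1) + 1 by omega, Nat.factorial_succ]
    simp only [Nat.add_sub_cancel]
  have hx : (i - 1)! * (∏ p ∈ Finset.Ico i (s - 1), p) = (s - 2)! := by
    have := Finset.prod_Ico_consecutive (fun p => p)
      (show (1:ℕ) ≤ i by omega) (show i ≤ s - 1 by omega)
    have h1 : (∏ p ∈ Finset.Ico 1 i, p) = (i - 1)! := by
      have := Finset.prod_Ico_id_eq_factorial (i - 1)
      rwa [show i - 1 + 1 = i by omega] at this
    have h2 : (∏ p ∈ Finset.Ico 1 (s - 1), p) = (s - 2)! := by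
      have := Finset.prod_Ico_id_eq_factorial (s - 2)
      rwa [show s - 2 + 1 = s - 1 by omega] at this
    rw [h1, h2] at this
    exact this
  have hy : (s - 2)! * (∏ p ∈ Finset.Ico (s - 1) (k - 2), p) = (k - 3)! := by
    have := Finset.prod_Ico_consecutive (fun p => p)
      (show (1:ℕ) ≤ s - 1 by omega) (show s - 1 ≤ k - 2 by omega)
    have h1 : (∏ p ∈ Finset.Ico 1 (s - 1), p) = (s - 2)! := by
      have := Finset.prod_Ico_id_eq_factorial (s - 2)
      rwa [show s - 2 + 1 = s - 1 by omega] at this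
    have h2 : (∏ p ∈ Finset.Ico 1 (k - 2), p) = (k - 3)! := by
      have := Finset.prod_Ico_id_eq_factorial (k - 3)
      rwa [show k - 3 + 1 = k - 2 by omega] at this
    rw [h1, h2] at this
    exact this
  have hk3 : (k - 3)! * ((k - 2) * (k - 1) * k) = k ! := by
    obtain ⟨m, rfl⟩ : ∃ m, k = m + 3 := ⟨k - 3, by omega⟩
    simp only [Nat.add_sub_cancel, show m + 3 - 1 = m + 2 by omega,
      show m + 3 - 2 = m + 1 by omega]
    rw [show (m+3)! = (m+3) * ((m+2) * ((m+1) * m !)) by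
      rw [Nat.factorial_succ, Nat.factorial_succ, Nat.factorial_succ]]
    ring
  have hg : k ! * (∏ p ∈ Finset.Ico (k + 1) (N + 1), p) = N ! := by
    have := Finset.prod_Ico_consecutive (fun p => p)
      (show (1:ℕ) ≤ k + 1 by omega) (show k + 1 ≤ N + 1 by omega)
    have h1 : (∏ p ∈ Finset.Ico 1 (k + 1), p) = k ! := Finset.prod_Ico_id_eq_factorial k
    have h2 : (∏ p ∈ Finset.Ico 1 (N + 1), p) = N ! := Finset.prod_Ico_id_eq_factorial N
    rw [h1, h2] at this
    exact this
  calc i ! * (∏ p ∈ Finset.Ico i (s - 1), p) * 1 * (∏ p ∈ Finset.Ico (s - 1) (k - 2), p) * 2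
        * (∏ p ∈ Finset.Ico (k + 1) (N + 1), p) * ((k - 2) * (k - 1) * k)
      = 2 * i * ((((i - 1)! * (∏ p ∈ Finset.Ico i (s - 1), p))
          * (∏ p ∈ Finset.Ico (s - 1) (k - 2), p)) * ((k - 2) * (k - 1) * k)
          * (∏ p ∈ Finset.Ico (k + 1) (N + 1), p)) := by
        rw [hifact]; ring
    _ = 2 * i * (((s - 2)! * (∏ p ∈ Finset.Ico (s - 1) (k - 2), p))
          * ((k - 2) * (k - 1) * k) * (∏ p ∈ Finset.Ico (k + 1) (N + 1), p)) := by rw [hx]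
    _ = 2 * i * ((k - 3)! * ((k - 2) * (k - 1) * k) * (∏ p ∈ Finset.Ico (k + 1) (N + 1), p)) := by
        rw [hy]
    _ = 2 * i * (k ! * (∏ p ∈ Finset.Ico (k + 1) (N + 1), p)) := by rw [hk3]
    _ = 2 * i * N ! := by rw [hg]

end SecretaryAux

open SecretaryAux Finset
open scoped Nat

/-- The probability that a relatively best item appears at some time `s` with
`i < s < k` (no relatively best item in between), no candidate appears at times
strictly between `s` and `k`, and a candidate appears at time `k`, equals
`2i(k−i−1)/((k−2)(k−1)k)`. -/
theorem prob_stops_being_candidate_at (N i k : ℕ) (hi : 2 ≤ i) (hik : i + 1 < k)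
    (hkN : k ≤ N) :
    uniformPerm N {σ : Equiv.Perm (Fin N) |
        ∃ s : ℕ, i < s ∧ s < k ∧ (∀ j : ℕ, i < j → j < s → 1 < relRank N σ j) ∧
          relRank N σ s = 1 ∧ (∀ j : ℕ, s < j → j < k → 2 < relRank N σ j) ∧
          relRank N σ k ≤ 2}
      = ((2 * i * (k - i - 1) : ℕ) : ℝ≥0∞) / (((k - 2) * (k - 1) * k : ℕ) : ℝ≥0∞) := by
  classical
  have hk4 : 4 ≤ k := by omega
  -- the per-s events in code form
  set E : ℕ → Set (Equiv.Perm (Fin N)) := fun s =>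
    {σ | ∀ j : Fin N, Qp i s k (j.val + 1) (codeFn N σ j + 1)} with hE
  -- the event is the disjoint union of the E s
  have hset : {σ : Equiv.Perm (Fin N) |
      ∃ s : ℕ, i < s ∧ s < k ∧ (∀ j : ℕ, i < j → j < s → 1 < relRank N σ j) ∧
        relRank N σ s = 1 ∧ (∀ j : ℕ, s < j → j < k → 2 < relRank N σ j) ∧
        relRank N σ k ≤ 2} = ⋃ s ∈ Finset.Ioo i k, E s := by
    ext σ
    simp only [hE, Set.mem_setOf_eq, Set.mem_iUnion, Finset.mem_Ioo, exists_prop]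
    constructor
    · rintro ⟨s, hs1, hs2, hA, hB, hC, hD⟩
      refine ⟨s, ⟨hs1, hs2⟩, fun j => ?_⟩
      have hr := relRank_fin σ j
      refine ⟨fun h1 h2 => ?_, fun h1 => ?_, fun h1 h2 => ?_, fun h1 => ?_⟩
      · rw [← hr]; exact hA _ h1 h2
      · rw [← hr]; rw [← h1] at hB; exact hB
      · rw [← hr]; exact hC _ h1 h2
      · rw [← hr]; rw [← h1] at hD; exact hD
    · rintro ⟨s, ⟨hs1, hs2⟩, hP⟩
      refine ⟨s, hs1, hs2, ?_, ?_, ?_, ?_⟩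
      · intro j hj1 hj2
        have hjN : j - 1 < N := by omega
        have := (hP ⟨j - 1, hjN⟩).1 (by simpa using by omega) (by simpa using by omega)
        rw [relRank_eq_codeFn σ (show 1 ≤ j by omega) (by omega)]
        omega
      · have hsN : s - 1 < N := by omega
        have := (hP ⟨s - 1, hsN⟩).2.1 (by simpa using by omega)
        rw [relRank_eq_codeFn σ (show 1 ≤ s by omega) (by omega)]
        omega
      · intro j hj1 hj2
        have hjN : j - 1 < N := by omega
        have := (hP ⟨j - 1, hjN⟩).2.2.1 (by simpa using by omega) (by simpa using by omega)
        rw [relRank_eq_codeFn σ (show 1 ≤ j by omega) (by omega)]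
        omega
      · have hkN' : k - 1 < N := by omega
        have := (hP ⟨k - 1, hkN'⟩).2.2.2 (by simpa using by omega)
        rw [relRank_eq_codeFn σ (show 1 ≤ k by omega) (by omega)]
        omega
  -- disjointness
  have hdisj : (↑(Finset.Ioo i k) : Set ℕ).PairwiseDisjoint E := by
    intro s hs t ht hst
    simp only [Finset.coe_Ioo, Set.mem_Ioo] at hs ht
    have key : ∀ s t : ℕ, i < s → s < k → i < t → t < k → s < t → Disjoint (E s) (E t) := by
      intro s t hs1 hs2 ht1 ht2 hlt
      rw [Set.disjoint_left]
      intro σ h1 h2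
      simp only [hE, Set.mem_setOf_eq] at h1 h2
      have hsN : s - 1 < N := by omega
      have e1 := (h1 ⟨s - 1, hsN⟩).2.1 (by simpa using by omega)
      have e2 := (h2 ⟨s - 1, hsN⟩).1 (by simpa using by omega) (by simpa using by omega)
      omega
    rcases Nat.lt_or_ge s t with h | h
    · exact key s t hs.1 hs.2 ht.1 ht.2 h
    · exact (key t s ht.1 ht.2 hs.1 hs.2 (by omega)).symm
  -- the measure of each E s
  have hcard : ∀ s ∈ Finset.Ioo i k,
      uniformPerm N (E s) = ((2 * i : ℕ) : ℝ≥0∞) / (((k - 2) * (k - 1) * k : ℕ) : ℝ≥0∞) := by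
    intro s hs
    simp only [Finset.mem_Ioo] at hs
    have hES : E s = ↑(Finset.univ.filter fun σ : Equiv.Perm (Fin N) =>
        ∀ j : Fin N, Qp i s k (j.val + 1) (codeFn N σ j + 1)) := by
      ext σ
      simp [hE]
    unfold uniformPerm
    rw [hES, PMF.toMeasure_apply_finset]
    simp only [PMF.uniformOfFintype_apply]
    rw [Finset.sum_const, nsmul_eq_mul]
    have hcc : (Finset.univ.filter fun σ : Equiv.Perm (Fin N) =>
        ∀ j : Fin N, Qp i s k (j.val + 1) (codeFn N σ j + 1)).card
        = ∏ m ∈ Finset.range N, fFun i s k m := by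
      have h0 := card_code_filter (N := N)
        (fun j (x : Fin (j.val + 1)) => Qp i s k (j.val + 1) (x.val + 1))
      have hfe : (Finset.univ.filter fun σ : Equiv.Perm (Fin N) =>
          ∀ j : Fin N, Qp i s k (j.val + 1) (codeFn N σ j + 1)).card
          = (Finset.univ.filter fun σ : Equiv.Perm (Fin N) =>
          ∀ j : Fin N, Qp i s k (j.val + 1) ((codeFull N σ j).val + 1)).card := by
        congr 1
      rw [hfe, h0]
      rw [← Fin.prod_univ_eq_prod_range (fun m => fFun i s k m)]
      refine Finset.prod_congr rfl fun j _ => ?_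
      rw [card_filter_fin_val (j.val + 1) (fun v => Qp i s k (j.val + 1) (v + 1))]
      have := factor_card (i := i) (s := s) (k := k) hi hs.1 hs.2 (j.val + 1) (by omega)
      simpa using this
    rw [hcc, Fintype.card_perm, Fintype.card_fin]
    have hnum := prod_fFun (i := i) (s := s) (k := k) N hi hs.1 hs.2 (by omega)
    have hNfac : ((N ! : ℕ) : ℝ≥0∞) ≠ 0 := by
      simp [Nat.factorial_ne_zero]
    have hNfac' : ((N ! : ℕ) : ℝ≥0∞) ≠ ⊤ := ENNReal.natCast_ne_top _
    have hK : (((k - 2) * (k - 1) * k : ℕ) : ℝ≥0∞) ≠ 0 := by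
      simp only [ne_eq, Nat.cast_eq_zero, Nat.mul_eq_zero, not_or]
      omega
    have hK' : (((k - 2) * (k - 1) * k : ℕ) : ℝ≥0∞) ≠ ⊤ := ENNReal.natCast_ne_top _
    rw [← div_eq_mul_inv]
    rw [ENNReal.div_eq_div_iff hK hK' hNfac hNfac']
    rw [← Nat.cast_mul, ← Nat.cast_mul]
    norm_cast
    rw [mul_comm, hnum]
    ring
  -- put it together
  rw [hset, uniformPerm]
  rw [show (PMF.uniformOfFintype (Equiv.Perm (Fin N))).toMeasure = uniformPerm N from rfl]
  rw [measure_biUnion_finset hdisj (fun b _ => MeasurableSpace.measurableSet_top)]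
  rw [Finset.sum_congr rfl hcard, Finset.sum_const, Nat.card_Ioo, nsmul_eq_mul]
  rw [← mul_div_assoc]
  congr 1
  rw [← Nat.cast_mul]
  congr 1
  ring

end
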